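/- For n \ge 1 define F_n = \sum_{k=n}^\infty (p_k - 1)/(p_n p_{n+1} \cdots p_{k-1}) (with the empty product for k = n equal to 1). Then p_n < F_n < p_n + 1 for every n \ge 1, and consequently \lfloor F_n \rfloor = p_n. -/

import Mathlib

open scoped BigOperators

/-- `p k` is the `(k+1)`-st prime, i.e. the paper's `p_{k+1}` (so `p 0 = 2`). -/
noncomputable def p (k : ℕ) : ℕ := Nat.nth Nat.Prime k

/-- `tailF m` is the paper's `F_{m+1} = ∑_{k=m+1}^∞ (p_k - 1)/(p_{m+1} ⋯ p_{k-1})`. -/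
noncomputable def tailF (m : ℕ) : ℝ :=
  ∑' j : ℕ, ((p (m + j) : ℝ) - 1) / ∏ i ∈ Finset.range j, (p (m + i) : ℝ)

lemma pP (k : ℕ) : (p k).Prime := Nat.prime_nth_prime k
lemma p2 (k : ℕ) : 2 ≤ p k := (pP k).two_le
lemma pposR (k : ℕ) : (0:ℝ) < (p k : ℝ) := by exact_mod_cast (pP k).pos
lemma pmono : StrictMono p := Nat.nth_strictMono Nat.infinite_setOf_prime
lemma p_lt_succ (k : ℕ) : p k < p (k+1) := pmono (Nat.lt_succ_self k)
lemma next_prime_le {k q : ℕ} (hq : q.Prime) (h : p k < q) : p (k+1) ≤ q := by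
  have h1 : k < Nat.count Nat.Prime q :=
    (Nat.lt_nth_iff_count_lt Nat.infinite_setOf_prime).2 h
  have := Nat.nth_monotone Nat.infinite_setOf_prime h1
  rwa [Nat.nth_count hq] at this
lemma bertrand (k : ℕ) : p (k+1) + 1 ≤ 2 * p k := by
  obtain ⟨q, hq, hlt, hle⟩ := Nat.exists_prime_lt_and_le_two_mul (p k) (pP k).pos.ne'
  have h1 : p (k+1) ≤ q := next_prime_le hq hlt
  rcases lt_or_eq_of_le hle with h | h
  · omega
  · exfalso
    have : ¬ q.Prime := by
      rw [h]
      intro hh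
      rcases (Nat.Prime.eq_one_or_self_of_dvd hh 2 ⟨p k, rfl⟩) with h2 | h2 <;>
        · have := p2 k; omega
    exact this hq

lemma p2R (k : ℕ) : (2:ℝ) ≤ (p k : ℝ) := by exact_mod_cast p2 k
lemma p_succ_ge (k : ℕ) : p k + 1 ≤ p (k+1) := pmono (Nat.lt_succ_self k)
lemma bertrandR (k : ℕ) : (p (k+1) : ℝ) + 1 ≤ 2 * p k := by exact_mod_cast bertrand k

noncomputable def P (m N : ℕ) : ℝ := ∏ i ∈ Finset.range N, (p (m + i) : ℝ)
noncomputable def term (m j : ℕ) : ℝ := ((p (m + j) : ℝ) - 1) / P m j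

lemma tailF_eq (m : ℕ) : tailF m = ∑' j, term m j := rfl

lemma two_pow_le_P (m N : ℕ) : (2:ℝ)^N ≤ P m N := by
  calc (2:ℝ)^N = ∏ _i ∈ Finset.range N, (2:ℝ) := by
        rw [Finset.prod_const, Finset.card_range]
    _ ≤ P m N := Finset.prod_le_prod (fun i _ => by norm_num) (fun i _ => p2R _)

lemma P_pos (m N : ℕ) : 0 < P m N := lt_of_lt_of_le (by positivity) (two_pow_le_P m N)

lemma term_nonneg (m j : ℕ) : 0 ≤ term m j := by
  apply div_nonneg _ (P_pos m j).le
  linarith [p2R (m + j)]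

lemma term_zero (m : ℕ) : term m 0 = (p m : ℝ) - 1 := by unfold term P; simp

lemma P_succ' (m j : ℕ) : P m (j+1) = P (m+1) j * (p m : ℝ) := by
  unfold P
  rw [Finset.prod_range_succ']
  have h : ∀ i ∈ Finset.range j, ((p (m + (i+1)) : ℝ)) = (p ((m+1) + i) : ℝ) := by
    intro i _
    rw [show m + (i+1) = m+1+i from by omega]
  rw [Finset.prod_congr rfl h, show m + 0 = m from rfl]

lemma term_succ (m j : ℕ) : term m (j+1) = term (m+1) j / (p m : ℝ) := by
  unfold term
  rw [P_succ', div_div, show m + (j+1) = (m+1)+j from by omega]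

lemma term_succ_le (m j : ℕ) : term m (j+1) ≤ 2 * (1/2:ℝ)^j := by
  have h1 : (p (m + (j+1)) : ℝ) - 1 ≤ 2 * p (m + j) := by
    have h := bertrandR (m + j)
    rw [show m + (j+1) = m + j + 1 from by omega]; linarith
  have h2 : P m (j+1) = P m j * (p (m+j) : ℝ) := by
    unfold P; rw [Finset.prod_range_succ]
  unfold term
  rw [h2, div_le_iff₀ (mul_pos (P_pos m j) (pposR (m+j)))]
  calc (p (m + (j+1)) : ℝ) - 1 ≤ 2 * p (m + j) := h1
    _ ≤ 2 * (1/2)^j * (P m j * (p (m+j))) := by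
        have h3 : (1:ℝ) ≤ (1/2)^j * P m j := by
          have h5 := two_pow_le_P m j
          have h4 : ((1:ℝ)/2)^j * (2:ℝ)^j = 1 := by
            rw [← mul_pow]; norm_num
          nlinarith [pow_pos (show (0:ℝ) < 1/2 by norm_num) j]
        nlinarith [pposR (m+j)]

lemma summable_term (m : ℕ) : Summable (term m) := by
  have hg : Summable (fun j : ℕ => ((p m : ℝ) + 4) * (1/2)^j) :=
    (summable_geometric_of_lt_one (by norm_num) (by norm_num)).mul_left _
  refine Summable.of_nonneg_of_le (term_nonneg m) (fun j => ?_) hg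
  cases j with
  | zero =>
    rw [term_zero]
    simp only [pow_zero, mul_one]
    linarith [pposR m]
  | succ i =>
    calc term m (i+1) ≤ 2 * (1/2)^i := term_succ_le m i
      _ = 4 * (1/2)^(i+1) := by ring
      _ ≤ ((p m : ℝ) + 4) * (1/2)^(i+1) := by
          have := pposR m
          have := pow_pos (show (0:ℝ) < 1/2 by norm_num) (i+1)
          nlinarith

lemma tailF_rec (m : ℕ) : tailF m = ((p m : ℝ) - 1) + tailF (m+1) / (p m : ℝ) := by
  rw [tailF_eq, Summable.tsum_eq_zero_add (summable_term m), term_zero]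
  congr 1
  rw [tailF_eq]
  calc ∑' j, term m (j+1) = ∑' j, term (m+1) j / (p m : ℝ) :=
        tsum_congr (fun j => term_succ m j)
    _ = (∑' j, term (m+1) j) / (p m : ℝ) := tsum_div_const

lemma tail_tail_le (m : ℕ) : ∑' j, term m (j+1) ≤ 4 := by
  calc ∑' j, term m (j+1) ≤ ∑' j : ℕ, 2 * (1/2:ℝ)^j := by
        apply Summable.tsum_le_tsum (fun i => term_succ_le m i)
        · exact (summable_nat_add_iff 1).2 (summable_term m)
        · exact (summable_geometric_of_lt_one (by norm_num) (by norm_num)).mul_left 2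
    _ = 2 * (1 - 1/2)⁻¹ := by
        rw [tsum_mul_left, tsum_geometric_of_lt_one (by norm_num) (by norm_num)]
    _ = 4 := by norm_num

lemma crude_upper (m : ℕ) : tailF m ≤ (p m : ℝ) + 3 := by
  rw [tailF_eq, Summable.tsum_eq_zero_add (summable_term m), term_zero]
  linarith [tail_tail_le m]

lemma lower_weak (m : ℕ) : (p m : ℝ) ≤ tailF m := by
  rw [tailF_eq]
  have h := Summable.sum_le_tsum (Finset.range 2) (fun j _ => term_nonneg m j) (summable_term m)
  rw [Finset.sum_range_succ, Finset.sum_range_one, term_zero] at h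
  have h1 : (1:ℝ) ≤ term m 1 := by
    unfold term P
    rw [Finset.prod_range_one, show m + 0 = m from rfl,
      le_div_iff₀ (pposR m), one_mul]
    have h2 := p_succ_ge m
    have : (p m : ℝ) + 1 ≤ (p (m+1) : ℝ) := by exact_mod_cast h2
    linarith
  linarith

lemma lower_strict (m : ℕ) : (p m : ℝ) < tailF m := by
  have h1 := lower_weak (m+1)
  have h2 : (p m : ℝ) + 1 ≤ (p (m+1) : ℝ) := by exact_mod_cast p_succ_ge m
  have h3 : (1:ℝ) < tailF (m+1) / (p m : ℝ) :=
    (one_lt_div (pposR m)).2 (by linarith)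
  rw [tailF_rec m]
  linarith

lemma upper_aux : ∀ N m, tailF m ≤ ((p m : ℝ) + 1) + 2/2^N := by
  intro N
  induction N with
  | zero => intro m; have := crude_upper m; simp only [pow_zero]; linarith
  | succ N ih =>
    intro m
    have h1 := ih (m+1)
    have h2 := bertrandR m
    have hp := p2R m
    have hx : (0:ℝ) < 2/(2^N*2) := by positivity
    have e : (2:ℝ)^(N+1) = 2^N * 2 := pow_succ 2 N
    have e2 : (2:ℝ)/2^N = 2*(2/(2^N*2)) := by
      field_simp
    have key : tailF (m+1) ≤ (2 + 2/(2^N*2)) * (p m : ℝ) := by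
      have h5 := mul_le_mul_of_nonneg_right hp hx.le
      nlinarith
    have h6 : tailF (m+1) / (p m : ℝ) ≤ 2 + 2/(2^N*2) :=
      (div_le_iff₀ (pposR m)).2 key
    rw [e]
    linarith [tailF_rec m]

lemma upper_le (m : ℕ) : tailF m ≤ (p m : ℝ) + 1 := by
  by_contra h
  push_neg at h
  set ε := tailF m - ((p m : ℝ) + 1) with hε
  have hε0 : 0 < ε := by simp [hε]; linarith
  obtain ⟨N, hN⟩ := pow_unbounded_of_one_lt (2/ε) (by norm_num : (1:ℝ) < 2)
  have h2 : 2/2^N < ε := by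
    rw [div_lt_iff₀ (by positivity)]
    rw [div_lt_iff₀ hε0] at hN
    nlinarith
  have := upper_aux N m
  simp only [hε] at h2
  linarith

lemma exists_strict (m : ℕ) : ∃ d, p (m + d + 1) + 1 < 2 * p (m + d) := by
  by_contra h
  push_neg at h
  have heq : ∀ d, (p (m + d + 1) : ℤ) = 2 * p (m + d) - 1 := by
    intro d
    have h1 := h d
    have h2 := bertrand (m + d)
    omega
  have hform : ∀ j, (p (m + 1 + j) : ℤ) = 2^j * ((p (m+1) : ℤ) - 1) + 1 := by
    intro j
    induction j with
    | zero => simp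
    | succ j ih =>
      have e3 : m + 1 + (j+1) = m + (1+j) + 1 := by omega
      rw [e3, heq (1+j), show m + (1+j) = m + 1 + j from by omega, ih]; ring
  set q := p (m+1) with hq
  haveI : Fact q.Prime := Fact.mk (pP (m+1))
  have hq2 : 2 < q := lt_of_le_of_lt (p2 m) (pmono (Nat.lt_succ_self m))
  have h2ne : (2 : ZMod q) ≠ 0 := by
    intro hc
    have : (q : ℕ) ∣ 2 := by
      have : ((2:ℕ) : ZMod q) = 0 := by exact_mod_cast hc
      exact (ZMod.natCast_eq_zero_iff 2 q).1 this
    have := Nat.le_of_dvd (by norm_num) this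
    omega
  have hfermat : (2 : ZMod q)^(q - 1) = 1 := ZMod.pow_card_sub_one_eq_one h2ne
  have hj := hform (q - 1)
  have hzero : ((p (m + 1 + (q-1)) : ℤ) : ZMod q) = 0 := by
    rw [hj]
    push_cast
    rw [ZMod.natCast_self]
    rw [hfermat]
    ring
  have hdvd : (q : ℕ) ∣ p (m + 1 + (q - 1)) := by
    rwa [Int.cast_natCast, ZMod.natCast_eq_zero_iff] at hzero
  have hlt : q < p (m + 1 + (q - 1)) := by
    apply pmono
    omega
  have := ((pP (m + 1 + (q-1))).eq_one_or_self_of_dvd q hdvd)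
  rcases this with h' | h' <;> omega

lemma upper_strict_of (d : ℕ) : ∀ m, p (m + d + 1) + 1 < 2 * p (m + d) → tailF m < (p m : ℝ) + 1 := by
  induction d with
  | zero =>
    intro m h
    have h1 : (p (m+1) : ℝ) + 1 < 2 * p m := by exact_mod_cast h
    have h2 := upper_le (m+1)
    have h3 : tailF (m+1) / (p m : ℝ) < 2 := by
      rw [div_lt_iff₀ (pposR m)]
      linarith
    rw [tailF_rec m]; linarith
  | succ d ih =>
    intro m h
    rw [show m + (d+1) = (m+1) + d from by omega, show (m+1) + d + 1 = m+1+d+1 from rfl] at h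
    have h1 := ih (m+1) h
    have h2 := bertrandR m
    have h3 : tailF (m+1) / (p m : ℝ) < 2 := by
      rw [div_lt_iff₀ (pposR m)]
      have : (p (m+1) : ℝ) + 1 ≤ 2 * p m := h2
      linarith
    rw [tailF_rec m]; linarith

lemma upper_strict (m : ℕ) : tailF m < (p m : ℝ) + 1 := by
  obtain ⟨d, hd⟩ := exists_strict m
  exact upper_strict_of d m hd

/-- `p_n < F_n < p_n + 1`, hence `⌊F_n⌋ = p_n` (here 0-indexed). -/
theorem statement4 :
    ∀ n, (p n : ℝ) < tailF n ∧ tailF n < (p n : ℝ) + 1 ∧ ⌊tailF n⌋ = (p n : ℤ) := by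

  intro n
  refine ⟨lower_strict n, upper_strict n, ?_⟩
  rw [Int.floor_eq_iff]
  constructor
  · push_cast
    exact (lower_strict n).le
  · push_cast
    exact upper_strict n
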